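/- Assume π > 0, rank(O) = rank(T) = m, and U^T O is invertible. With b_1 = (U^T O)π, b_∞^T = 1_m^T (U^T O)^{-1}, and B_x = (U^T O) A_x (U^T O)^{-1}, for any t ≥ 1 and observations x_1,…,x_t: Pr[x_1,…,x_t] = b_∞^T B_{x_t} ⋯ B_{x_1} b_1. -/

import Mathlib

open Matrix

lemma list_prod_conj {m n : ℕ} (M : Matrix (Fin m) (Fin m) ℝ) (hM : IsUnit M)
    (A B : Fin n → Matrix (Fin m) (Fin m) ℝ)
    (hB : ∀ x, B x = M * A x * M⁻¹) (l : List (Fin n)) :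
    (l.map B).prod = M * (l.map A).prod * M⁻¹ := by
  have hdet : IsUnit M.det := (Matrix.isUnit_iff_isUnit_det M).mp hM
  induction l with
  | nil => simp [Matrix.mul_nonsing_inv M hdet]
  | cons a l ih =>
      simp only [List.map_cons, List.prod_cons, ih, hB a, Matrix.mul_assoc,
        Matrix.nonsing_inv_mul_cancel_left M _ hdet]

lemma key_dot {m : ℕ} (M P : Matrix (Fin m) (Fin m) ℝ) (hdet : IsUnit M.det)
    (π : Fin m → ℝ) :
    dotProduct (Matrix.vecMul (fun _ => (1 : ℝ)) M⁻¹)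
        ((M * P * M⁻¹).mulVec (M.mulVec π))
      = dotProduct (fun _ => (1 : ℝ)) (P.mulVec π) := by
  rw [dotProduct_mulVec, Matrix.vecMul_vecMul, dotProduct_mulVec,
    ← Matrix.vecMul_vecMul, dotProduct_mulVec]
  congr 1
  rw [Matrix.vecMul_vecMul, Matrix.vecMul_vecMul]
  congr 1
  simp [Matrix.mul_assoc, Matrix.nonsing_inv_mul_cancel_left M _ hdet,
    Matrix.nonsing_inv_mul M hdet]

/-- with `π > 0`, `rank O = rank T = m`, and `Uᵀ O` invertible, and the
observable parameters `b_1 = (Uᵀ O) π`, `b_∞ᵀ = 1ₘᵀ (Uᵀ O)⁻¹`, `B_x = (Uᵀ O) A_x (Uᵀ O)⁻¹`,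
we have for any `t ≥ 1` and observations `x_1, …, x_t`:
`Pr[x_1,…,x_t] = b_∞ᵀ B_{x_t} ⋯ B_{x_1} b_1`, where by the observable operator formula
`Pr[x_1,…,x_t] = 1ₘᵀ A_{x_t} ⋯ A_{x_1} π` with `A_x = T diag(O_{x,·})`. -/
theorem hmm_joint_prob_observable_rep (m n t : ℕ)
    (T : Matrix (Fin m) (Fin m) ℝ) (O : Matrix (Fin n) (Fin m) ℝ) (π : Fin m → ℝ)
    (hπ : ∀ i, 0 < π i) (hO : O.rank = m) (hT : T.rank = m)
    (U : Matrix (Fin n) (Fin m) ℝ) (hU : IsUnit (Uᵀ * O))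
    (A B : Fin n → Matrix (Fin m) (Fin m) ℝ)
    (hA : ∀ x, A x = T * Matrix.diagonal (fun i => O x i))
    (hB : ∀ x, B x = (Uᵀ * O) * A x * (Uᵀ * O)⁻¹)
    (b1 : Fin m → ℝ) (hb1 : b1 = (Uᵀ * O).mulVec π)
    (binf : Fin m → ℝ) (hbinf : binf = Matrix.vecMul (fun _ => (1 : ℝ)) (Uᵀ * O)⁻¹)
    (x : Fin (t + 1) → Fin n) :
    dotProduct binf ((((List.ofFn x).reverse.map B).prod).mulVec b1)
      = dotProduct (fun _ => (1 : ℝ)) ((((List.ofFn x).reverse.map A).prod).mulVec π) := by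
  rw [list_prod_conj (Uᵀ * O) hU A B hB, hb1, hbinf,
    key_dot _ _ ((Matrix.isUnit_iff_isUnit_det _).mp hU)]
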